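/- Let ε := exp(2πi/3). Let U ⊆ ℂ be open, let z : ℂ → ℂ be three times differentiable on U and satisfy (ε−1)·(x + z(x)) = x·z(x) + 3 for all x ∈ U, and suppose x·(x²+3x+3) ≠ 0 and z(x)·(z(x)²+3z(x)+3) ≠ 0 for all x ∈ U. Let V ⊆ ℂ be open with z(U) ⊆ V, let ψ solve ψ'' = Q₂·ψ on V, and let g : ℂ → ℂ be twice differentiable and nonvanishing on U with g(x)² = z'(x) for all x ∈ U. Then Φ(x) := ψ(z(x))/g(x) solves Φ'' = Q₂·Φ on U. -/

import Mathlib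

open Complex

/-- `f` solves the equation `ψ'' = Q·ψ` on the open set `U`. -/
def SolvesOn (Q f : ℂ → ℂ) (U : Set ℂ) : Prop :=
  (∀ x ∈ U, DifferentiableAt ℂ f x) ∧ (∀ x ∈ U, DifferentiableAt ℂ (deriv f) x) ∧
    ∀ x ∈ U, deriv (deriv f) x = Q x * f x

/-- The coefficient of the normal form (2') of the second Chudnovsky equation. -/
noncomputable def Q₂ (x : ℂ) : ℂ :=
  -(1 / 4) * ((x + 1) * (x + 3) * (x ^ 2 + 3)) / (x ^ 2 * (x ^ 2 + 3 * x + 3) ^ 2)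

lemma mobius_hasDerivAt (a x : ℂ) (h : a - x ≠ 0) :
    HasDerivAt (fun y => (3 - a * y) / (a - y)) ((3 - a ^ 2) / (a - x) ^ 2) x := by
  have h1 : HasDerivAt (fun y : ℂ => 3 - a * y) (-a) x := by
    simpa using ((hasDerivAt_id x).const_mul a).const_sub 3
  have h2 : HasDerivAt (fun y : ℂ => a - y) (-1) x := by
    simpa using (hasDerivAt_id x).const_sub a
  have h3 := h1.fun_div h2 h
  refine h3.congr_deriv ?_; symm
  field_simp
  ring

lemma hd_inv_sq (c a x : ℂ) (h : a - x ≠ 0) :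
    HasDerivAt (fun y => c / (a - y) ^ 2) (2 * c / (a - x) ^ 3) x := by
  have h2 : HasDerivAt (fun y : ℂ => (a - y) ^ 2) (2 * (a - x) * -1) x := by
    have hb : HasDerivAt (fun y : ℂ => a - y) (-1) x := by
      simpa using (hasDerivAt_id x).const_sub a
    simpa using hb.fun_pow 2
  have h3 := (hasDerivAt_const x c).fun_div h2 (pow_ne_zero 2 h)
  refine h3.congr_deriv ?_; symm
  field_simp
  ring

lemma Q₂_mul (t D : ℂ) (hD : D ≠ 0) (ht : t ≠ 0) (hE : t^2 + 3*t + 3 ≠ 0) :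
    Q₂ t = (-(1/4) * ((t*D+D)*(t*D+3*D)*((t*D)^2+3*D^2)) * D^2) /
      ((t*D)^2 * ((t*D)^2+3*((t*D)*D)+3*D^2)^2) := by
  have hden2 : (t*D)^2 * ((t*D)^2+3*((t*D)*D)+3*D^2)^2 ≠ 0 := by
    apply mul_ne_zero (pow_ne_zero _ (mul_ne_zero ht hD))
    apply pow_ne_zero
    intro h
    apply hE
    have h2 : D^2 * (t^2+3*t+3) = 0 := by linear_combination h
    rcases mul_eq_zero.mp h2 with h3 | h3
    · exact absurd h3 (pow_ne_zero 2 hD)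
    · exact h3
  simp only [Q₂]
  rw [div_eq_div_iff (mul_ne_zero (pow_ne_zero _ ht) (pow_ne_zero _ hE)) hden2]
  ring

lemma key_identity (a x : ℂ) (ha2 : a^2 + 3*a + 3 = 0) (hD : a - x ≠ 0)
    (hx0 : x ≠ 0) (hx3 : x^2 + 3*x + 3 ≠ 0)
    (hz0 : (3-a*x)/(a-x) ≠ 0)
    (hz3 : ((3-a*x)/(a-x))^2 + 3*((3-a*x)/(a-x)) + 3 ≠ 0) :
    Q₂ ((3-a*x)/(a-x)) * ((3-a^2)^2/(a-x)^4) = Q₂ x := by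
  have hN : (3 - a*x) ≠ 0 := by
    intro h
    apply hz0
    rw [h, zero_div]
  have hE : (3-a*x)^2 + 3*((3-a*x)*(a-x)) + 3*(a-x)^2 ≠ 0 := by
    intro h
    apply hz3
    have hfr : ((3-a*x)/(a-x))^2 + 3*((3-a*x)/(a-x)) + 3
        = ((3-a*x)^2 + 3*((3-a*x)*(a-x)) + 3*(a-x)^2) / (a-x)^2 := by
      field_simp
    rw [hfr, h, zero_div]
  rw [Q₂_mul ((3-a*x)/(a-x)) (a-x) hD hz0 hz3, div_mul_cancel₀ _ hD]
  simp only [Q₂]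
  rw [div_mul_div_comm, div_eq_div_iff (by
      apply mul_ne_zero (mul_ne_zero (pow_ne_zero _ hN) (pow_ne_zero _ hE)) (pow_ne_zero _ hD))
    (mul_ne_zero (pow_ne_zero _ hx0) (pow_ne_zero _ hx3))]
  linear_combination ((-729) * x^5 + 729 * x^7 + 243 * x^9 + (-27) * x^11 + (-2187/2) * a^1 * x^3 + (5103/2) * a^1 * x^4 + (-729/2) * a^1 * x^5 + (-2187) * a^1 * x^6 + 243 * a^1 * x^7 + (-2187) * a^1 * x^8 + 81 * a^1 * x^9 + (-27) * a^1 * x^10 + (-27/2) * a^1 * x^11 + (27/2) * a^1 * x^12 + (-9/2) * a^1 * x^13 + (10935/4) * a^2 * x^2 + (-4374) * a^2 * x^3 + (6561/2) * a^2 * x^4 + 2916 * a^2 * x^5 + (-2187/4) * a^2 * x^6 + 5994 * a^2 * x^7 + (-729) * a^2 * x^8 + 918 * a^2 * x^9 + (81/4) * a^2 * x^10 + (81/2) * a^2 * x^12 + (-6) * a^2 * x^13 + (3/4) * a^2 * x^14 + (-2187) * a^3 * x^1 + (18225/4) * a^3 * x^2 + (-13851/2) * a^3 * x^3 + (-2673/2)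 * a^3 * x^4 + (-2187/2) * a^3 * x^5 + (-34263/4) * a^3 * x^6 + 1863 * a^3 * x^7 + (-2592) * a^3 * x^8 + 216 * a^3 * x^9 + (-1125/4) * a^3 * x^10 + (-243/2) * a^3 * x^11 + (45/2) * a^3 * x^12 + (-15/2) * a^3 * x^13 + (3/4) * a^3 * x^14 + (2187/4) * a^4 + (-5103/2) * a^4 * x^1 + (22599/4) * a^4 * x^2 + (-1458) * a^4 * x^3 + (14823/4) * a^4 * x^4 + (13851/2) * a^4 * x^5 + (-7533/4) * a^4 * x^6 + 3456 * a^4 * x^7 + (-2511/4) * a^4 * x^8 + (1539/2) * a^4 * x^9 + (549/4) * a^4 * x^10 + (-18) * a^4 * x^11 + (93/4) * a^4 * x^12 + (-7/2) * a^4 * x^13 + (1/4) * a^4 * x^14 + (2187/4) * a^5 + (-3645/2) * a^5 * x^1 + (3645/2) * a^5 * x^2 + (-6561/2) * a^5 * x^3 + (-10125/4) * a^5 * x^4 + 648 * a^5 * x^5 + (-2592) * a^5 * x^6 + 621 * a^5 * x^7 + (-3807/4) * a^5 * x^8 + (-81/2) * a^5 * x^9 + (-33/2) * a^5 * x^10 +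 (-57/2) * a^5 * x^11 + (25/4) * a^5 * x^12 + (-1) * a^5 * x^13 + (729/4) * a^6 + (-486) * a^6 * x^1 + (2187/2) * a^6 * x^2 + (243/4) * a^6 * x^4 + 918 * a^6 * x^5 + (-243) * a^6 * x^6 + 666 * a^6 * x^7 + (-81/4) * a^6 * x^8 + 36 * a^6 * x^9 + (27/2) * a^6 * x^10 + (-6) * a^6 * x^11 + (5/4) * a^6 * x^12 + (-243/2) * a^7 * x^1 + (243/2) * a^7 * x^2 + (-81/2) * a^7 * x^3 + (-27) * a^7 * x^4 + 27 * a^7 * x^5 + (-243) * a^7 * x^6 + 9 * a^7 * x^7 + (-27) * a^7 * x^8 + (-3/2) * a^7 * x^9 + (7/2) * a^7 * x^10 + (-1/2) * a^7 * x^11 + (-27) * a^8 * x^3 + 27 * a^8 * x^5 + 9 * a^8 * x^7 + (-1) * a^8 * x^9) * ha2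

/-- Auxiliary: explicit formula for the first derivative of the transformed solution. -/
noncomputable def Phi1 (a : ℂ) (ψ z g : ℂ → ℂ) : ℂ → ℂ := fun y =>
  deriv ψ (z y) * ((3 - a ^ 2) / ((a - y) ^ 2 * g y)) - ψ (z y) * (1 / ((a - y) * g y))

theorem chudnovsky_two_automorphism
    (U V : Set ℂ) (hU : IsOpen U) (hV : IsOpen V)
    (z g ψ : ℂ → ℂ)
    (hz1 : ∀ x ∈ U, DifferentiableAt ℂ z x)
    (hz2 : ∀ x ∈ U, DifferentiableAt ℂ (deriv z) x)
    (hz3 : ∀ x ∈ U, DifferentiableAt ℂ (deriv (deriv z)) x)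
    (hrel : ∀ x ∈ U, (Complex.exp (2 * Real.pi * Complex.I / 3) - 1) * (x + z x)
      = x * z x + 3)
    (hxne : ∀ x ∈ U, x * (x ^ 2 + 3 * x + 3) ≠ 0)
    (hzne : ∀ x ∈ U, z x * (z x ^ 2 + 3 * z x + 3) ≠ 0)
    (hzV : Set.MapsTo z U V)
    (hψ : SolvesOn Q₂ ψ V)
    (hg1 : ∀ x ∈ U, DifferentiableAt ℂ g x)
    (hg2 : ∀ x ∈ U, DifferentiableAt ℂ (deriv g) x)
    (hgne : ∀ x ∈ U, g x ≠ 0)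
    (hgsq : ∀ x ∈ U, g x ^ 2 = deriv z x) :
    SolvesOn Q₂ (fun x => ψ (z x) / g x) U := by
  obtain ⟨hψ1, hψ2, hψ3⟩ := hψ
  set ε := Complex.exp (2 * Real.pi * Complex.I / 3) with hεdef
  have hε3 : ε ^ 3 = 1 := by
    rw [hεdef, ← Complex.exp_nat_mul]
    rw [show ((3:ℕ):ℂ) * (2 * Real.pi * Complex.I / 3) = 2 * Real.pi * Complex.I by
      push_cast; ring, Complex.exp_two_pi_mul_I]
  have hεne : ε ≠ 1 := by
    intro h
    have him : ε.im = Real.sin (2 * Real.pi / 3) := by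
      rw [hεdef, show (2 * (Real.pi:ℂ) * Complex.I / 3) = ((2 * Real.pi / 3 : ℝ) : ℂ) * Complex.I by
        push_cast; ring, Complex.exp_ofReal_mul_I_im]
    rw [h] at him
    have hpos : 0 < Real.sin (2 * Real.pi / 3) :=
      Real.sin_pos_of_pos_of_lt_pi (by positivity) (by nlinarith [Real.pi_pos])
    simp [Complex.one_im] at him
    linarith [him ▸ hpos]
  have hεq : ε ^ 2 + ε + 1 = 0 := by
    have hfac : (ε - 1) * (ε ^ 2 + ε + 1) = 0 := by linear_combination hε3
    rcases mul_eq_zero.mp hfac with h1 | h2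
    · exact absurd (sub_eq_zero.mp h1) hεne
    · exact h2
  obtain ⟨a, hadef⟩ : ∃ w : ℂ, w = ε - 1 := ⟨_, rfl⟩
  rw [show ε - 1 = a from hadef.symm] at hrel
  have ha2 : a ^ 2 + 3 * a + 3 = 0 := by rw [hadef]; linear_combination hεq
  have hDne : ∀ x ∈ U, a - x ≠ 0 := by
    intro x hx h0
    have hax : a = x := sub_eq_zero.mp h0
    have hr := hrel x hx
    rw [hax] at hr
    have hx2 : x ^ 2 = 3 := by linear_combination hr
    have ha2' := ha2
    rw [hax] at ha2'
    have hxval : x = -2 := by linear_combination (ha2' - hx2) / 3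
    rw [hxval] at hx2
    norm_num at hx2
  have hzeqU : ∀ x ∈ U, z x = (3 - a * x) / (a - x) := by
    intro x hx
    rw [eq_div_iff (hDne x hx)]
    linear_combination hrel x hx
  have hzd : ∀ x ∈ U, HasDerivAt z ((3 - a ^ 2) / (a - x) ^ 2) x := by
    intro x hx
    have hev : z =ᶠ[nhds x] fun y => (3 - a * y) / (a - y) := by
      filter_upwards [hU.mem_nhds hx] with y hy
      exact hzeqU y hy
    exact (mobius_hasDerivAt a x (hDne x hx)).congr_of_eventuallyEq hev
  have hgd : ∀ x ∈ U, HasDerivAt g (deriv g x) x := fun x hx => (hg1 x hx).hasDerivAt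
  have hG2 : ∀ x ∈ U, g x ^ 2 * (a - x) ^ 2 = 3 - a ^ 2 := by
    intro x hx
    rw [hgsq x hx, (hzd x hx).deriv]
    exact div_mul_cancel₀ _ (pow_ne_zero 2 (hDne x hx))
  have hg' : ∀ x ∈ U, deriv g x = g x / (a - x) := by
    intro x hx
    have hDx := hDne x hx
    have hGx := hgne x hx
    have hsq : (fun y => g y ^ 2) =ᶠ[nhds x] fun y => (3 - a ^ 2) / (a - y) ^ 2 := by
      filter_upwards [hU.mem_nhds hx] with y hy
      rw [hgsq y hy, (hzd y hy).deriv]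
    have h1 : HasDerivAt (fun y => g y ^ 2) (2 * g x * deriv g x) x := by
      have h0 := (hgd x hx).fun_pow 2
      refine h0.congr_deriv ?_; symm
      push_cast
      ring
    have h2 := hd_inv_sq (3 - a ^ 2) a x hDx
    have e1 : 2 * g x * deriv g x = 2 * (3 - a ^ 2) / (a - x) ^ 3 := by
      have hde := hsq.deriv_eq
      rw [h1.deriv, h2.deriv] at hde
      exact hde
    have e1' : 2 * g x * deriv g x * (a - x) ^ 3 = 2 * (3 - a ^ 2) := by
      rw [e1]
      field_simp
    rw [eq_div_iff hDx]
    have h9 : (2 * g x * (a - x) ^ 2) * (deriv g x * (a - x))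
        = (2 * g x * (a - x) ^ 2) * g x := by
      linear_combination e1' - 2 * hG2 x hx
    exact mul_left_cancel₀ (mul_ne_zero (mul_ne_zero two_ne_zero hGx) (pow_ne_zero _ hDx)) h9
  have hstep1 : ∀ x ∈ U, HasDerivAt (fun y => ψ (z y) / g y) (Phi1 a ψ z g x) x := by
    intro x hx
    have hDx := hDne x hx
    have hGx := hgne x hx
    have hψz : HasDerivAt (fun y => ψ (z y))
        (deriv ψ (z x) * ((3 - a ^ 2) / (a - x) ^ 2)) x := by
      exact HasDerivAt.comp x ((hψ1 (z x) (hzV hx)).hasDerivAt) (hzd x hx)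
    have h := hψz.fun_div (hgd x hx) hGx
    refine h.congr_deriv ?_; symm
    rw [hg' x hx]
    unfold Phi1
    field_simp
  have hstep2 : ∀ x ∈ U, HasDerivAt (Phi1 a ψ z g)
      (Q₂ (z x) * ψ (z x) * ((3 - a ^ 2) ^ 2 / ((a - x) ^ 4 * g x))) x := by
    intro x hx
    have hGx := hgne x hx
    have hDx := hDne x hx
    have hb : HasDerivAt (fun y : ℂ => a - y) (-1) x := by
      simpa using (hasDerivAt_id x).const_sub a
    have hψzd : HasDerivAt (fun y => ψ (z y))
        (deriv ψ (z x) * ((3 - a ^ 2) / (a - x) ^ 2)) x := by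
      exact HasDerivAt.comp x ((hψ1 (z x) (hzV hx)).hasDerivAt) (hzd x hx)
    have hdψz : HasDerivAt (fun y => deriv ψ (z y))
        (Q₂ (z x) * ψ (z x) * ((3 - a ^ 2) / (a - x) ^ 2)) x := by
      have hc := HasDerivAt.comp x ((hψ2 (z x) (hzV hx)).hasDerivAt) (hzd x hx)
      rw [hψ3 (z x) (hzV hx)] at hc
      exact hc
    have hq : HasDerivAt (fun y => (3 - a ^ 2) / ((a - y) ^ 2 * g y))
        ((3 - a ^ 2) / ((a - x) ^ 3 * g x)) x := by
      have hsq : HasDerivAt (fun y : ℂ => (a - y) ^ 2) (2 * (a - x) * -1) x := by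
        simpa using hb.fun_pow 2
      have hden := hsq.fun_mul (hgd x hx)
      have h0 := (hasDerivAt_const x (3 - a ^ 2)).fun_div hden
        (mul_ne_zero (pow_ne_zero 2 hDx) hGx)
      refine h0.congr_deriv ?_; symm
      rw [hg' x hx]
      field_simp
      ring
    have hr : HasDerivAt (fun y => 1 / ((a - y) * g y)) 0 x := by
      have hden := hb.fun_mul (hgd x hx)
      have h0 := (hasDerivAt_const x (1:ℂ)).fun_div hden (mul_ne_zero hDx hGx)
      refine h0.congr_deriv ?_; symm
      rw [hg' x hx]
      field_simp
      ring
    have hA := hdψz.fun_mul hq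
    have hB := hψzd.fun_mul hr
    have h := hA.fun_sub hB
    unfold Phi1
    refine h.congr_deriv ?_; symm
    have e1 : ((3 - a ^ 2) / (a - x) ^ 2) * ((3 - a ^ 2) / ((a - x) ^ 2 * g x))
        = (3 - a ^ 2) ^ 2 / ((a - x) ^ 4 * g x) := by
      rw [div_mul_div_comm]
      ring_nf
    have e2 : ((3 - a ^ 2) / (a - x) ^ 2) * (1 / ((a - x) * g x))
        = (3 - a ^ 2) / ((a - x) ^ 3 * g x) := by
      rw [div_mul_div_comm]
      ring_nf
    calc Q₂ (z x) * ψ (z x) * ((3 - a ^ 2) ^ 2 / ((a - x) ^ 4 * g x))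
        = Q₂ (z x) * ψ (z x)
            * (((3 - a ^ 2) / (a - x) ^ 2) * ((3 - a ^ 2) / ((a - x) ^ 2 * g x))) := by
          rw [e1]
      _ = Q₂ (z x) * ψ (z x) * ((3 - a ^ 2) / (a - x) ^ 2) * ((3 - a ^ 2) / ((a - x) ^ 2 * g x))
            + deriv ψ (z x) * (((3 - a ^ 2) / (a - x) ^ 2) * (1 / ((a - x) * g x)))
            - (deriv ψ (z x) * ((3 - a ^ 2) / (a - x) ^ 2) * (1 / ((a - x) * g x))
              + ψ (z x) * 0) := by ring
      _ = Q₂ (z x) * ψ (z x) * ((3 - a ^ 2) / (a - x) ^ 2) * ((3 - a ^ 2) / ((a - x) ^ 2 * g x))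
            + deriv ψ (z x) * ((3 - a ^ 2) / ((a - x) ^ 3 * g x))
            - (deriv ψ (z x) * ((3 - a ^ 2) / (a - x) ^ 2) * (1 / ((a - x) * g x))
              + ψ (z x) * 0) := by rw [e2]
  refine ⟨fun x hx => (hstep1 x hx).differentiableAt, fun x hx => ?_, fun x hx => ?_⟩
  · have hev : deriv (fun y => ψ (z y) / g y) =ᶠ[nhds x] Phi1 a ψ z g := by
      filter_upwards [hU.mem_nhds hx] with y hy
      exact (hstep1 y hy).deriv
    exact (hstep2 x hx).differentiableAt.congr_of_eventuallyEq hev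
  · have hev : deriv (fun y => ψ (z y) / g y) =ᶠ[nhds x] Phi1 a ψ z g := by
      filter_upwards [hU.mem_nhds hx] with y hy
      exact (hstep1 y hy).deriv
    rw [hev.deriv_eq, (hstep2 x hx).deriv]
    obtain ⟨hx0, hx3⟩ := mul_ne_zero_iff.mp (hxne x hx)
    obtain ⟨hz0, hz3⟩ := mul_ne_zero_iff.mp (hzne x hx)
    rw [hzeqU x hx] at hz0 hz3
    show Q₂ (z x) * ψ (z x) * ((3 - a ^ 2) ^ 2 / ((a - x) ^ 4 * g x))
        = Q₂ x * (ψ (z x) / g x)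
    rw [hzeqU x hx, ← key_identity a x ha2 (hDne x hx) hx0 hx3 hz0 hz3]
    have e3 : (3 - a ^ 2) ^ 2 / ((a - x) ^ 4 * g x)
        = ((3 - a ^ 2) ^ 2 / (a - x) ^ 4) * (1 / g x) := by
      rw [div_mul_div_comm]
      ring_nf
    rw [e3]
    ring
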